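/- Let V₊ and V₋ be finite-dimensional complex inner product spaces, let D₊ : V₊ → V₋ be a linear map with adjoint D₋ : V₋ → V₊ (so ⟨D₊u, v⟩ = ⟨u, D₋v⟩), and let t > 0 be a real number. Then the traces of the operator exponentials satisfy the McKean–Singer identity: tr( exp(−t · D₋∘D₊) ) − tr( exp(−t · D₊∘D₋) ) = dim ker(D₊) − dim ker(D₋). In particular, the left-hand side is independent of t. -/

import Mathlib

open scoped Nat

private lemma mckean_comp_pow {R M N : Type*} [CommRing R] [AddCommGroup M] [Module R M]
    [AddCommGroup N] [Module R N] (f : M →ₗ[R] N) (g : N →ₗ[R] M) (k : ℕ) :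
    ((g ∘ₗ f) ^ (k + 1) : M →ₗ[R] M) = g ∘ₗ (((f ∘ₗ g) ^ k : N →ₗ[R] N) ∘ₗ f) := by
  induction k with
  | zero => ext v; simp
  | succ k ih =>
    rw [pow_succ, ih, pow_succ]
    simp only [Module.End.mul_eq_comp, LinearMap.comp_assoc]

private lemma mckean_trace_pow_comm {M N : Type*} [AddCommGroup M] [Module ℂ M]
    [AddCommGroup N] [Module ℂ N] [Module.Free ℂ M] [Module.Finite ℂ M]
    [Module.Free ℂ N] [Module.Finite ℂ N]
    (f : M →ₗ[ℂ] N) (g : N →ₗ[ℂ] M) (k : ℕ) :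
    LinearMap.trace ℂ M ((g ∘ₗ f) ^ (k + 1)) = LinearMap.trace ℂ N ((f ∘ₗ g) ^ (k + 1)) := by
  rw [mckean_comp_pow, LinearMap.trace_comp_comm', LinearMap.comp_assoc, pow_succ,
    Module.End.mul_eq_comp]

private lemma mckean_coe_pow {V : Type*} [NormedAddCommGroup V] [NormedSpace ℂ V]
    (x : V →L[ℂ] V) (n : ℕ) :
    ((x ^ n : V →L[ℂ] V) : V →ₗ[ℂ] V) = ((x : V →ₗ[ℂ] V)) ^ n := by
  induction n with
  | zero => rfl
  | succ n ih => rw [pow_succ, pow_succ, ← ih]; rfl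

private lemma mckean_trace_exp {V : Type*} [NormedAddCommGroup V] [NormedSpace ℂ V]
    [FiniteDimensional ℂ V] (x : V →L[ℂ] V) :
    LinearMap.trace ℂ V ((NormedSpace.exp x : V →L[ℂ] V) : V →ₗ[ℂ] V)
      = ∑' (n : ℕ), (n ! : ℂ)⁻¹ • LinearMap.trace ℂ V (((x : V →ₗ[ℂ] V)) ^ n) := by
  let T : (V →L[ℂ] V) →ₗ[ℂ] ℂ :=
    (LinearMap.trace ℂ V).comp (ContinuousLinearMap.coeLM ℂ)
  let T' : (V →L[ℂ] V) →L[ℂ] ℂ := LinearMap.toContinuousLinearMap T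
  have hs : Summable fun n : ℕ => (n !⁻¹ : ℂ) • x ^ n := NormedSpace.expSeries_summable' x
  have h1 : LinearMap.trace ℂ V ((NormedSpace.exp x : V →L[ℂ] V) : V →ₗ[ℂ] V)
      = T' (NormedSpace.exp x) := rfl
  rw [h1, NormedSpace.exp_eq_tsum (𝕂 := ℂ), T'.map_tsum hs]
  congr 1
  ext n
  show T ((n !⁻¹ : ℂ) • x ^ n) = _
  rw [map_smul]
  congr 1
  show LinearMap.trace ℂ V ((x ^ n : V →L[ℂ] V) : V →ₗ[ℂ] V) = _
  rw [mckean_coe_pow]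

private lemma mckean_summable_trace {V : Type*} [NormedAddCommGroup V] [NormedSpace ℂ V]
    [FiniteDimensional ℂ V] (x : V →L[ℂ] V) :
    Summable fun n : ℕ => (n ! : ℂ)⁻¹ • LinearMap.trace ℂ V (((x : V →ₗ[ℂ] V)) ^ n) := by
  let T : (V →L[ℂ] V) →ₗ[ℂ] ℂ :=
    (LinearMap.trace ℂ V).comp (ContinuousLinearMap.coeLM ℂ)
  let T' : (V →L[ℂ] V) →L[ℂ] ℂ := LinearMap.toContinuousLinearMap T
  have hs : Summable fun n : ℕ => (n !⁻¹ : ℂ) • x ^ n := NormedSpace.expSeries_summable' x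
  have h := hs.map T'.toLinearMap.toAddMonoidHom T'.continuous
  convert h using 2 with n
  show _ = T ((n !⁻¹ : ℂ) • x ^ n)
  rw [map_smul]
  congr 1
  show _ = LinearMap.trace ℂ V ((x ^ n : V →L[ℂ] V) : V →ₗ[ℂ] V)
  rw [mckean_coe_pow]


/-- **McKean–Singer identity in finite dimensions.**
For adjoint operators `D₊ : V₊ → V₋`, `D₋ : V₋ → V₊` between finite-dimensional complex
inner product spaces and any `t > 0`,
`tr(exp(−t·D₋D₊)) − tr(exp(−t·D₊D₋)) = dim ker D₊ − dim ker D₋`;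
in particular the left-hand side is independent of `t`. -/
theorem mcKean_singer {Vp Vm : Type*} [NormedAddCommGroup Vp] [InnerProductSpace ℂ Vp]
    [NormedAddCommGroup Vm] [InnerProductSpace ℂ Vm]
    [FiniteDimensional ℂ Vp] [FiniteDimensional ℂ Vm]
    (Dp : Vp →L[ℂ] Vm) (Dm : Vm →L[ℂ] Vp)
    (hadj : ∀ (u : Vp) (v : Vm), (@inner ℂ Vm _ (Dp u) v) = @inner ℂ Vp _ u (Dm v))
    (t : ℝ) (ht : 0 < t) :
    LinearMap.trace ℂ Vp ((NormedSpace.exp (-(t : ℂ) • (Dm.comp Dp)) : Vp →L[ℂ] Vp) : Vp →ₗ[ℂ] Vp)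
      - LinearMap.trace ℂ Vm
          ((NormedSpace.exp (-(t : ℂ) • (Dp.comp Dm)) : Vm →L[ℂ] Vm) : Vm →ₗ[ℂ] Vm)
      = (Module.finrank ℂ (LinearMap.ker (Dp : Vp →ₗ[ℂ] Vm)) : ℂ)
        - (Module.finrank ℂ (LinearMap.ker (Dm : Vm →ₗ[ℂ] Vp)) : ℂ) := by
  classical
  set A : Vp →ₗ[ℂ] Vp := (Dm : Vm →ₗ[ℂ] Vp) ∘ₗ (Dp : Vp →ₗ[ℂ] Vm) with hA
  set B : Vm →ₗ[ℂ] Vm := (Dp : Vp →ₗ[ℂ] Vm) ∘ₗ (Dm : Vm →ₗ[ℂ] Vp) with hB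
  have hcoeA : ((-(t : ℂ) • (Dm.comp Dp) : Vp →L[ℂ] Vp) : Vp →ₗ[ℂ] Vp) = -(t : ℂ) • A := rfl
  have hcoeB : ((-(t : ℂ) • (Dp.comp Dm) : Vm →L[ℂ] Vm) : Vm →ₗ[ℂ] Vm) = -(t : ℂ) • B := rfl
  have e1 := mckean_trace_exp (-(t : ℂ) • (Dm.comp Dp))
  have e2 := mckean_trace_exp (-(t : ℂ) • (Dp.comp Dm))
  have s1 := mckean_summable_trace (-(t : ℂ) • (Dm.comp Dp))
  have s2 := mckean_summable_trace (-(t : ℂ) • (Dp.comp Dm))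
  rw [hcoeA] at e1 s1
  rw [hcoeB] at e2 s2
  rw [e1, e2, ← Summable.tsum_sub s1 s2]
  have hterm : ∀ n : ℕ, n ≠ 0 →
      (n ! : ℂ)⁻¹ • LinearMap.trace ℂ Vp ((-(t : ℂ) • A) ^ n)
        - (n ! : ℂ)⁻¹ • LinearMap.trace ℂ Vm ((-(t : ℂ) • B) ^ n) = 0 := by
    intro n hn
    obtain ⟨k, rfl⟩ := Nat.exists_eq_succ_of_ne_zero hn
    rw [smul_pow, smul_pow, map_smul, map_smul,
      mckean_trace_pow_comm (Dp : Vp →ₗ[ℂ] Vm) (Dm : Vm →ₗ[ℂ] Vp) k, sub_self]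
  rw [tsum_eq_single 0 hterm]
  have h0 : (0! : ℂ)⁻¹ • LinearMap.trace ℂ Vp ((-(t : ℂ) • A) ^ 0)
      - (0! : ℂ)⁻¹ • LinearMap.trace ℂ Vm ((-(t : ℂ) • B) ^ 0)
      = (Module.finrank ℂ Vp : ℂ) - (Module.finrank ℂ Vm : ℂ) := by
    simp [LinearMap.trace_one]
  rw [h0]
  -- Now the dimension count.
  have hker : LinearMap.ker (Dm : Vm →ₗ[ℂ] Vp) = (LinearMap.range (Dp : Vp →ₗ[ℂ] Vm))ᗮ := by
    ext v
    simp only [LinearMap.mem_ker, Submodule.mem_orthogonal]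
    constructor
    · rintro hv w ⟨u, rfl⟩
      simp only [ContinuousLinearMap.coe_coe] at hv ⊢
      rw [hadj u v, hv, inner_zero_right]
    · intro h
      have h' : (inner ℂ (Dm v) (Dm v) : ℂ) = 0 := by
        rw [← hadj (Dm v) v]
        exact h _ ⟨Dm v, rfl⟩
      exact inner_self_eq_zero.mp h'
  have h1 : Module.finrank ℂ (LinearMap.range (Dp : Vp →ₗ[ℂ] Vm)) + Module.finrank ℂ (LinearMap.ker (Dp : Vp →ₗ[ℂ] Vm))
      = Module.finrank ℂ Vp := LinearMap.finrank_range_add_finrank_ker (Dp : Vp →ₗ[ℂ] Vm)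
  have h2 : Module.finrank ℂ (LinearMap.range (Dp : Vp →ₗ[ℂ] Vm)) + Module.finrank ℂ ((LinearMap.range (Dp : Vp →ₗ[ℂ] Vm))ᗮ)
      = Module.finrank ℂ Vm := Submodule.finrank_add_finrank_orthogonal _
  rw [hker]
  have := h1.symm.trans rfl
  have hnat : Module.finrank ℂ Vp + Module.finrank ℂ ((LinearMap.range (Dp : Vp →ₗ[ℂ] Vm))ᗮ)
      = Module.finrank ℂ (LinearMap.ker (Dp : Vp →ₗ[ℂ] Vm)) + Module.finrank ℂ Vm := by omega
  have hc : (Module.finrank ℂ Vp : ℂ) + (Module.finrank ℂ ((LinearMap.range (Dp : Vp →ₗ[ℂ] Vm))ᗮ) : ℂ)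
      = (Module.finrank ℂ (LinearMap.ker (Dp : Vp →ₗ[ℂ] Vm)) : ℂ) + (Module.finrank ℂ Vm : ℂ) := by
    exact_mod_cast congrArg (Nat.cast : ℕ → ℂ) hnat
  linear_combination hc
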